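/- Let d ≥ 1, τ > 0, R > 0, let ν be a probability measure on ℝ^d supported in [−R,R]^d, and let y ∈ [−R,R]^d. Define f_y(x) := log φ_{τ²}(x − y) − log p_{ν,τ}(x). Then f_y is differentiable on ℝ^d with ∇ f_y(x) = (y − m_{ν,τ}(x)) / τ², and consequently ‖∇ f_y(x)‖₂ ≤ 2R√d / τ² for every x ∈ ℝ^d; in particular f_y is (2R√d/τ²)-Lipschitz. -/

import Mathlib

open MeasureTheory

set_option maxHeartbeats 1000000
set_option synthInstance.maxHeartbeats 200000

/-- Density of `N(0, τ² I_d)` on `ℝ^d`. -/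
noncomputable def gphi (d : ℕ) (τ : ℝ) (z : EuclideanSpace ℝ (Fin d)) : ℝ :=
  (2 * Real.pi * τ ^ 2) ^ (-(d : ℝ) / 2) * Real.exp (-‖z‖ ^ 2 / (2 * τ ^ 2))

/-- Density of `ν * N(0, τ² I_d)`. -/
noncomputable def pdens (d : ℕ) (τ : ℝ) (ν : Measure (EuclideanSpace ℝ (Fin d)))
    (x : EuclideanSpace ℝ (Fin d)) : ℝ :=
  ∫ y, gphi d τ (x - y) ∂ν

/-- Gaussian posterior mean of `ν` at `x`. -/
noncomputable def postMean (d : ℕ) (τ : ℝ) (ν : Measure (EuclideanSpace ℝ (Fin d)))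
    (x : EuclideanSpace ℝ (Fin d)) : EuclideanSpace ℝ (Fin d) :=
  (pdens d τ ν x)⁻¹ • ∫ y, gphi d τ (x - y) • y ∂ν

variable {d : ℕ} {τ : ℝ}

lemma gphi_pos (hτ : 0 < τ) (z : EuclideanSpace ℝ (Fin d)) : 0 < gphi d τ z := by
  unfold gphi
  have : (0:ℝ) < 2 * Real.pi * τ ^ 2 := by positivity
  positivity

lemma gphi_le (hτ : 0 < τ) (z : EuclideanSpace ℝ (Fin d)) :
    gphi d τ z ≤ (2 * Real.pi * τ ^ 2) ^ (-(d : ℝ) / 2) := by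
  unfold gphi
  have h1 : (0:ℝ) < (2 * Real.pi * τ ^ 2) ^ (-(d : ℝ) / 2) := by
    have : (0:ℝ) < 2 * Real.pi * τ ^ 2 := by positivity
    positivity
  have h2 : -‖z‖ ^ 2 / (2 * τ ^ 2) ≤ 0 :=
    div_nonpos_of_nonpos_of_nonneg (neg_nonpos.2 (by positivity)) (by positivity)
  nlinarith [Real.exp_le_one_iff.2 h2]

lemma hasFDerivAt_gphi (hτ : 0 < τ) (z : EuclideanSpace ℝ (Fin d)) :
    HasFDerivAt (gphi d τ) ((-(τ ^ 2)⁻¹ * gphi d τ z) • innerSL ℝ z) z := by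
  have h1 : HasFDerivAt (fun z : EuclideanSpace ℝ (Fin d) => ‖z‖ ^ 2)
      (2 • innerSL ℝ z) z := by
    simpa using (hasFDerivAt_id z).norm_sq
  have h2 : HasFDerivAt (fun z : EuclideanSpace ℝ (Fin d) => -‖z‖ ^ 2 / (2 * τ ^ 2))
      ((-(2 * τ ^ 2))⁻¹ • (2 • innerSL ℝ z)) z := by
    have heq : (fun z : EuclideanSpace ℝ (Fin d) => -‖z‖ ^ 2 / (2 * τ ^ 2))
        = fun z : EuclideanSpace ℝ (Fin d) => (-(2 * τ ^ 2))⁻¹ * ‖z‖ ^ 2 := by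
      funext z; field_simp
    rw [heq]
    exact h1.const_mul _
  have h3 := ((h2.exp).const_mul ((2 * Real.pi * τ ^ 2) ^ (-(d : ℝ) / 2)))
  refine h3.congr_fderiv ?_
  ext v
  simp [gphi, ContinuousLinearMap.smul_apply]
  ring

/-- The log-likelihood ratio `f_y(x) = log φ_{τ²}(x−y) − log p_{ν,τ}(x)` is differentiable with
gradient `(y − m_{ν,τ}(x))/τ²`, of norm at most `2R√d/τ²`; in particular it is
`(2R√d/τ²)`-Lipschitz. -/
theorem stmt16 (d : ℕ) (hd : 1 ≤ d) (τ R : ℝ) (hτ : 0 < τ) (hR : 0 < R)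
    (ν : Measure (EuclideanSpace ℝ (Fin d))) [IsProbabilityMeasure ν]
    (hsupp : ∀ᵐ y ∂ν, ∀ i, |y i| ≤ R)
    (y : EuclideanSpace ℝ (Fin d)) (hy : ∀ i, |y i| ≤ R) :
    Differentiable ℝ (fun x => Real.log (gphi d τ (x - y)) - Real.log (pdens d τ ν x)) ∧
    (∀ x, gradient (fun x => Real.log (gphi d τ (x - y)) - Real.log (pdens d τ ν x)) x
        = (τ ^ 2)⁻¹ • (y - postMean d τ ν x)) ∧
    (∀ x, ‖gradient (fun x => Real.log (gphi d τ (x - y)) - Real.log (pdens d τ ν x)) x‖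
        ≤ 2 * R * Real.sqrt d / τ ^ 2) ∧
    LipschitzWith (Real.toNNReal (2 * R * Real.sqrt d / τ ^ 2))
      (fun x => Real.log (gphi d τ (x - y)) - Real.log (pdens d τ ν x)) := by
  classical
  have hτ2 : (0:ℝ) < τ ^ 2 := by positivity
  set C : ℝ := (2 * Real.pi * τ ^ 2) ^ (-(d : ℝ) / 2) with hCdef
  have hC : 0 < C := by
    have : (0:ℝ) < 2 * Real.pi * τ ^ 2 := by positivity
    positivity
  set M : ℝ := R * Real.sqrt d with hMdef
  have hM : 0 < M := by
    have : (0:ℝ) < Real.sqrt d := Real.sqrt_pos.2 (by exact_mod_cast hd)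
    positivity
  -- componentwise bound implies norm bound
  have normle : ∀ v : EuclideanSpace ℝ (Fin d), (∀ i, |v i| ≤ R) → ‖v‖ ≤ M := by
    intro v hv
    rw [EuclideanSpace.norm_eq]
    have : ∑ i, ‖v i‖ ^ 2 ≤ ∑ _i : Fin d, R ^ 2 := by
      apply Finset.sum_le_sum
      intro i _
      have := hv i
      have : ‖v i‖ ≤ R := by rwa [Real.norm_eq_abs]
      nlinarith [abs_nonneg (v i), Real.norm_eq_abs (v i)]
    calc Real.sqrt (∑ i, ‖v i‖ ^ 2) ≤ Real.sqrt (∑ _i : Fin d, R ^ 2) := Real.sqrt_le_sqrt this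
      _ = M := by
        rw [Finset.sum_const, Finset.card_univ, Fintype.card_fin, nsmul_eq_mul,
          Real.sqrt_mul (by positivity), Real.sqrt_sq hR.le, hMdef, mul_comm]
  have hyM : ‖y‖ ≤ M := normle y hy
  have huM : ∀ᵐ u ∂ν, ‖u‖ ≤ M := hsupp.mono fun u hu => normle u hu
  -- basic facts about gphi
  have hgpos : ∀ z : EuclideanSpace ℝ (Fin d), 0 < gphi d τ z := gphi_pos hτ
  have hgle : ∀ z : EuclideanSpace ℝ (Fin d), gphi d τ z ≤ C := gphi_le hτ
  have hgcont : Continuous (gphi d τ) := by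
    unfold gphi
    continuity
  -- integrability
  have hintg : ∀ x : EuclideanSpace ℝ (Fin d), Integrable (fun u => gphi d τ (x - u)) ν := by
    intro x
    refine (integrable_const C).mono' ?_ ?_
    · exact (hgcont.comp (continuous_const.sub continuous_id)).aestronglyMeasurable
    · filter_upwards with u
      rw [Real.norm_eq_abs, abs_of_pos (hgpos _)]
      exact hgle _
  have hintgu : ∀ x : EuclideanSpace ℝ (Fin d), Integrable (fun u => gphi d τ (x - u) • u) ν := by
    intro x
    refine (integrable_const (C * M)).mono' ?_ ?_
    · exact ((hgcont.comp (continuous_const.sub continuous_id)).smul continuous_id).aestronglyMeasurable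
    · filter_upwards [huM] with u hu
      rw [norm_smul, Real.norm_eq_abs, abs_of_pos (hgpos _)]
      exact mul_le_mul (hgle _) hu (norm_nonneg _) hC.le
  -- positivity of pdens
  have hppos : ∀ x : EuclideanSpace ℝ (Fin d), 0 < pdens d τ ν x := by
    intro x
    rw [pdens, show (fun u => gphi d τ (x - u)) = fun u => gphi d τ (x - u) from rfl]
    rw [integral_pos_iff_support_of_nonneg (fun u => (hgpos _).le) (hintg x)]
    have : Function.support (fun u : EuclideanSpace ℝ (Fin d) => gphi d τ (x - u)) = Set.univ := by
      ext u; simp [Function.mem_support, (hgpos (x - u)).ne']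
    rw [this]
    simp
  -- the gradient of pdens
  set I : EuclideanSpace ℝ (Fin d) → EuclideanSpace ℝ (Fin d) := fun x => ∫ u, gphi d τ (x - u) • u ∂ν with hIdef
  set Gp : EuclideanSpace ℝ (Fin d) → EuclideanSpace ℝ (Fin d) := fun x => (-(τ ^ 2)⁻¹) • (pdens d τ ν x • x - I x) with hGpdef
  have hpderiv : ∀ x : EuclideanSpace ℝ (Fin d), HasFDerivAt (pdens d τ ν) (InnerProductSpace.toDual ℝ (EuclideanSpace ℝ (Fin d)) (Gp x)) x := by
    intro x₀
    set F' : EuclideanSpace ℝ (Fin d) → EuclideanSpace ℝ (Fin d) → EuclideanSpace ℝ (Fin d) →L[ℝ] ℝ := fun x u => (-(τ ^ 2)⁻¹ * gphi d τ (x - u)) • innerSL ℝ (x - u)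
      with hF'def
    have hdiff : ∀ u : EuclideanSpace ℝ (Fin d), ∀ x : EuclideanSpace ℝ (Fin d), HasFDerivAt (fun x => gphi d τ (x - u)) (F' x u) x := by
      intro u x
      have h1 : HasFDerivAt (fun x : EuclideanSpace ℝ (Fin d) => x - u) (ContinuousLinearMap.id ℝ (EuclideanSpace ℝ (Fin d))) x := by
        simpa using (hasFDerivAt_id x).sub_const u
      have := (hasFDerivAt_gphi hτ (x - u)).comp x h1
      refine this.congr_fderiv ?_
      ext v
      simp [hF'def]
    have hF'cont : Continuous (F' x₀) := by
      rw [hF'def]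
      exact Continuous.smul (continuous_const.mul (hgcont.comp (continuous_const.sub continuous_id)))
        ((innerSL ℝ).continuous.comp (continuous_const.sub continuous_id))
    have hF'norm : ∀ x u : EuclideanSpace ℝ (Fin d), ‖F' x u‖ = (τ ^ 2)⁻¹ * gphi d τ (x - u) * ‖x - u‖ := by
      intro x u
      rw [hF'def]
      beta_reduce
      rw [norm_smul (-(τ ^ 2)⁻¹ * gphi d τ (x - u)) (innerSL ℝ (x - u)), innerSL_apply_norm, Real.norm_eq_abs, abs_mul, abs_neg, abs_inv,
        abs_of_pos hτ2, abs_of_pos (hgpos _)]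
    have key : HasFDerivAt (fun x => ∫ u, gphi d τ (x - u) ∂ν) (∫ u, F' x₀ u ∂ν) x₀ := by
      apply hasFDerivAt_integral_of_dominated_of_fderiv_le (s := Metric.ball x₀ 1)
        (bound := fun _ => (τ ^ 2)⁻¹ * C * (‖x₀‖ + 1 + M)) (Metric.ball_mem_nhds x₀ one_pos)
      · filter_upwards with x
        exact (hgcont.comp (continuous_const.sub continuous_id)).aestronglyMeasurable
      · exact hintg x₀
      · exact hF'cont.aestronglyMeasurable
      · filter_upwards [huM] with u hu x hx
        rw [hF'norm]
        have h1 : ‖x - u‖ ≤ ‖x₀‖ + 1 + M := by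
          have h2 : ‖x - x₀‖ < 1 := by simpa [dist_eq_norm] using hx
          calc ‖x - u‖ ≤ ‖x - x₀‖ + ‖x₀‖ + ‖u‖ := by
                have := norm_add_le (x - x₀) x₀
                have h3 := norm_sub_le (x - x₀ + x₀) u
                simp at h3 ⊢
                calc ‖x - u‖ ≤ ‖x‖ + ‖u‖ := norm_sub_le _ _
                  _ ≤ ‖x - x₀‖ + ‖x₀‖ + ‖u‖ := by
                      have : ‖x‖ ≤ ‖x - x₀‖ + ‖x₀‖ := by
                        simpa using norm_add_le (x - x₀) x₀
                      linarith
            _ ≤ ‖x₀‖ + 1 + M := by linarith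
        have h4 : gphi d τ (x - u) * ‖x - u‖ ≤ C * (‖x₀‖ + 1 + M) :=
          mul_le_mul (hgle _) h1 (norm_nonneg _) hC.le
        rw [mul_assoc, mul_assoc]
        exact mul_le_mul_of_nonneg_left h4 (by positivity)
      · exact integrable_const _
      · filter_upwards with u x _hx
        exact hdiff u x
    have hF'int : Integrable (F' x₀) ν := by
      refine (integrable_const ((τ ^ 2)⁻¹ * C * (‖x₀‖ + M))).mono'
        hF'cont.aestronglyMeasurable ?_
      filter_upwards [huM] with u hu
      rw [hF'norm]
      have h1 : ‖x₀ - u‖ ≤ ‖x₀‖ + M := by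
        calc ‖x₀ - u‖ ≤ ‖x₀‖ + ‖u‖ := norm_sub_le _ _
          _ ≤ ‖x₀‖ + M := by linarith
      have h4 : gphi d τ (x₀ - u) * ‖x₀ - u‖ ≤ C * (‖x₀‖ + M) :=
        mul_le_mul (hgle _) h1 (norm_nonneg _) hC.le
      rw [mul_assoc, mul_assoc]
      exact mul_le_mul_of_nonneg_left h4 (by positivity)
    have heq : (∫ u, F' x₀ u ∂ν) = InnerProductSpace.toDual ℝ (EuclideanSpace ℝ (Fin d)) (Gp x₀) := by
      ext v
      rw [ContinuousLinearMap.integral_apply hF'int]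
      have h1 : ∀ u : EuclideanSpace ℝ (Fin d), (F' x₀ u) v
          = (-(τ ^ 2)⁻¹) * (inner ℝ v x₀ * gphi d τ (x₀ - u) - gphi d τ (x₀ - u) * inner ℝ v u) := by
        intro u
        rw [hF'def]
        simp only [ContinuousLinearMap.smul_apply, innerSL_apply_apply, smul_eq_mul]
        rw [inner_sub_left, real_inner_comm (x₀ : EuclideanSpace ℝ (Fin d)) v, real_inner_comm (u : EuclideanSpace ℝ (Fin d)) v]
        ring
      simp_rw [h1]
      rw [integral_const_mul]
      rw [integral_sub ((hintg x₀).const_mul _) ?_]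
      · rw [integral_const_mul]
        have h2 : ∫ u, gphi d τ (x₀ - u) * inner ℝ v u ∂ν = inner ℝ v (I x₀) := by
          rw [hIdef]
          beta_reduce
          rw [← integral_inner (𝕜 := ℝ) (hintgu x₀) v]
          congr 1
          funext u
          rw [real_inner_smul_right]
        rw [h2, InnerProductSpace.toDual_apply_apply, hGpdef]
        simp only
        rw [real_inner_comm]
        rw [inner_smul_left, inner_sub_left, real_inner_smul_left]
        simp only [RCLike.conj_to_real, map_neg, map_inv₀]
        rw [pdens, real_inner_comm v (I x₀)]
        push_cast
        ring
      · have : (fun u => gphi d τ (x₀ - u) * inner ℝ v u) = fun u => inner ℝ v (gphi d τ (x₀ - u) • u) := by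
          funext u
          rw [real_inner_smul_right]
        rw [this]
        exact (innerSL ℝ v).integrable_comp (hintgu x₀)
    rw [← heq]
    exact key
  -- gradient of the first term
  have hgderiv : ∀ x : EuclideanSpace ℝ (Fin d), HasFDerivAt (fun x => Real.log (gphi d τ (x - y)))
      (InnerProductSpace.toDual ℝ (EuclideanSpace ℝ (Fin d)) ((-(τ ^ 2)⁻¹) • (x - y))) x := by
    intro x
    have heq : (fun x : EuclideanSpace ℝ (Fin d) => Real.log (gphi d τ (x - y)))
        = fun x : EuclideanSpace ℝ (Fin d) => Real.log C + (-(2 * τ ^ 2))⁻¹ * ‖x - y‖ ^ 2 := by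
      funext x
      rw [gphi, Real.log_mul (by positivity) (Real.exp_ne_zero _), Real.log_exp, ← hCdef]
      field_simp
    rw [heq]
    have h1 : HasFDerivAt (fun x : EuclideanSpace ℝ (Fin d) => ‖x - y‖ ^ 2)
        (2 • (innerSL ℝ (x - y))) x := by
      have h0 : HasFDerivAt (fun x : EuclideanSpace ℝ (Fin d) => x - y) (ContinuousLinearMap.id ℝ (EuclideanSpace ℝ (Fin d))) x := by
        simpa using (hasFDerivAt_id x).sub_const y
      simpa using h0.norm_sq
    have h2 := (h1.const_mul ((-(2 * τ ^ 2))⁻¹)).const_add (Real.log C)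
    refine h2.congr_fderiv ?_
    ext v
    simp only [InnerProductSpace.toDual_apply_apply, ContinuousLinearMap.add_apply, ContinuousLinearMap.smul_apply,
      innerSL_apply_apply, smul_eq_mul]
    rw [real_inner_smul_left]
    simp
    ring
  -- combine: gradient of f
  have hgrad : ∀ x : EuclideanSpace ℝ (Fin d), HasGradientAt
      (fun x => Real.log (gphi d τ (x - y)) - Real.log (pdens d τ ν x))
      ((τ ^ 2)⁻¹ • (y - postMean d τ ν x)) x := by
    intro x
    have hp := (hppos x).ne'
    have h1 := hgderiv x
    have h2 := (hpderiv x).log hp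
    rw [← _root_.map_smul] at h2
    have h3 := h1.sub h2
    rw [hasGradientAt_iff_hasFDerivAt]
    have hIx : (∫ (u : EuclideanSpace ℝ (Fin d)), gphi d τ (x - u) • u ∂ν) = I x := by
      rw [hIdef]
    have hv : InnerProductSpace.toDual ℝ (EuclideanSpace ℝ (Fin d)) (-(τ ^ 2)⁻¹ • (x - y))
          - InnerProductSpace.toDual ℝ (EuclideanSpace ℝ (Fin d)) ((pdens d τ ν x)⁻¹ • Gp x)
        = InnerProductSpace.toDual ℝ (EuclideanSpace ℝ (Fin d)) ((τ ^ 2)⁻¹ • (y - postMean d τ ν x)) := by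
      rw [← map_sub]
      congr 1
      simp only [hGpdef]
      rw [postMean, hIx]
      match_scalars <;> field_simp <;> ring
    rw [← hv]
    exact h3
  -- conclusions
  have hdiff : Differentiable ℝ (fun x => Real.log (gphi d τ (x - y)) - Real.log (pdens d τ ν x)) :=
    fun x => ((hgrad x).hasFDerivAt).differentiableAt
  have hgradeq : ∀ x, gradient (fun x => Real.log (gphi d τ (x - y)) - Real.log (pdens d τ ν x)) x
      = (τ ^ 2)⁻¹ • (y - postMean d τ ν x) := fun x => (hgrad x).gradient
  have hmle : ∀ x : EuclideanSpace ℝ (Fin d), ‖postMean d τ ν x‖ ≤ M := by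
    intro x
    rw [postMean, norm_smul, Real.norm_eq_abs, abs_inv, abs_of_pos (hppos x)]
    have h1 : ‖∫ u, gphi d τ (x - u) • u ∂ν‖ ≤ M * pdens d τ ν x := by
      calc ‖∫ u, gphi d τ (x - u) • u ∂ν‖ ≤ ∫ u, ‖gphi d τ (x - u) • u‖ ∂ν :=
            norm_integral_le_integral_norm _
        _ ≤ ∫ u, M * gphi d τ (x - u) ∂ν := by
            apply integral_mono_ae (hintgu x).norm ((hintg x).const_mul M)
            filter_upwards [huM] with u hu
            rw [norm_smul, Real.norm_eq_abs, abs_of_pos (hgpos _)]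
            calc gphi d τ (x - u) * ‖u‖ ≤ gphi d τ (x - u) * M :=
                  mul_le_mul_of_nonneg_left hu (hgpos _).le
              _ = M * gphi d τ (x - u) := mul_comm _ _
        _ = M * pdens d τ ν x := by rw [integral_const_mul, pdens]
    calc (pdens d τ ν x)⁻¹ * ‖∫ u, gphi d τ (x - u) • u ∂ν‖
        ≤ (pdens d τ ν x)⁻¹ * (M * pdens d τ ν x) :=
          mul_le_mul_of_nonneg_left h1 (inv_nonneg.2 (hppos x).le)
      _ = M := by
          rw [mul_comm M (pdens d τ ν x), ← mul_assoc, inv_mul_cancel₀ (hppos x).ne', one_mul]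
  have hnormbd : ∀ x, ‖(τ ^ 2)⁻¹ • (y - postMean d τ ν x)‖ ≤ 2 * R * Real.sqrt d / τ ^ 2 := by
    intro x
    rw [norm_smul, Real.norm_eq_abs, abs_inv, abs_of_pos hτ2]
    have h1 : ‖y - postMean d τ ν x‖ ≤ 2 * M := by
      calc ‖y - postMean d τ ν x‖ ≤ ‖y‖ + ‖postMean d τ ν x‖ := norm_sub_le _ _
        _ ≤ M + M := add_le_add hyM (hmle x)
        _ = 2 * M := by ring
    calc (τ ^ 2)⁻¹ * ‖y - postMean d τ ν x‖ ≤ (τ ^ 2)⁻¹ * (2 * M) :=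
          mul_le_mul_of_nonneg_left h1 (by positivity)
      _ = 2 * R * Real.sqrt d / τ ^ 2 := by rw [hMdef]; field_simp
  refine ⟨hdiff, hgradeq, fun x => by rw [hgradeq x]; exact hnormbd x, ?_⟩
  apply lipschitzWith_of_nnnorm_fderiv_le hdiff
  intro x
  rw [((hgrad x).hasFDerivAt).fderiv]
  rw [← NNReal.coe_le_coe, coe_nnnorm, Real.coe_toNNReal _ (by positivity)]
  rw [(InnerProductSpace.toDual ℝ (EuclideanSpace ℝ (Fin d))).norm_map]
  exact hnormbd x
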